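/- Let G ≤ Sym(X) and H ≤ Sym(Y) be join-coherent permutation groups with Y finite. Then the wreath product G ≀ H = G^Y ⋊ H, acting imprimitively on X × Y by (x,y)(f,h) = (x·(yf), yh), is join-coherent. -/

import Mathlib

/-- The orbit partition of a permutation `g`, as a setoid on `Ω`. -/
def piPart {Ω : Type*} (g : Equiv.Perm Ω) : Setoid Ω :=
  MulAction.orbitRel (Subgroup.zpowers g) Ω

/-- The set of orbit partitions of elements of a permutation group `G`. -/
def piSet {Ω : Type*} (G : Subgroup (Equiv.Perm Ω)) : Set (Setoid Ω) :=
  {P | ∃ g ∈ G, piPart g = P}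

/-- `G` is join-coherent if its set of orbit partitions is closed under joins. -/
def JoinCoherent {Ω : Type*} (G : Subgroup (Equiv.Perm Ω)) : Prop :=
  ∀ P ∈ piSet G, ∀ Q ∈ piSet G, P ⊔ Q ∈ piSet G

/-- `G` is meet-coherent if its set of orbit partitions is closed under meets. -/
def MeetCoherent {Ω : Type*} (G : Subgroup (Equiv.Perm Ω)) : Prop :=
  ∀ P ∈ piSet G, ∀ Q ∈ piSet G, P ⊓ Q ∈ piSet G

theorem Equiv.Perm.apply_inv_self {α : Type*} (f : Equiv.Perm α) (x : α) : f (f⁻¹ x) = x :=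
  Equiv.apply_symm_apply f x

theorem Equiv.Perm.inv_apply_self {α : Type*} (f : Equiv.Perm α) (x : α) : f⁻¹ (f x) = x :=
  Equiv.symm_apply_apply f x

namespace WreathAux

open Equiv MulAction Subgroup

variable {Ω : Type*}

theorem piPart_rel {g : Equiv.Perm Ω} {a b : Ω} :
    piPart g a b ↔ ∃ n : ℤ, (g ^ n) b = a := by
  unfold piPart
  rw [MulAction.orbitRel_apply, MulAction.mem_orbit_iff]
  constructor
  · rintro ⟨⟨u, hu⟩, h⟩
    rw [Subgroup.mem_zpowers_iff] at hu
    obtain ⟨n, rfl⟩ := hu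
    exact ⟨n, h⟩
  · rintro ⟨n, h⟩
    exact ⟨⟨g ^ n, Subgroup.mem_zpowers_iff.2 ⟨n, rfl⟩⟩, h⟩

theorem piPart_one : piPart (1 : Equiv.Perm Ω) = (⊥ : Setoid Ω) := by
  ext a b
  rw [piPart_rel]
  constructor
  · rintro ⟨n, rfl⟩; simp
  · rintro rfl; exact ⟨0, by simp⟩

theorem rel_sSup_iff {s : Set (Equiv.Perm Ω)} {a b : Ω} :
    sSup (piPart '' s) a b ↔ ∃ u ∈ Subgroup.closure s, u b = a := by
  constructor
  · intro h
    rw [Setoid.sSup_eq_eqvGen] at h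
    change Relation.EqvGen _ a b at h
    induction h with
    | rel x y hxy =>
      obtain ⟨r, ⟨t, ht, rfl⟩, hr⟩ := hxy
      obtain ⟨n, hn⟩ := piPart_rel.1 hr
      exact ⟨t ^ n, zpow_mem (Subgroup.subset_closure ht) n, hn⟩
    | refl x => exact ⟨1, one_mem _, rfl⟩
    | symm x y _ ih =>
      obtain ⟨u, hu, rfl⟩ := ih
      exact ⟨u⁻¹, inv_mem hu, Equiv.Perm.inv_apply_self u y⟩
    | trans x y z _ _ ih1 ih2 =>
      obtain ⟨u, hu, rfl⟩ := ih1
      obtain ⟨v, hv, rfl⟩ := ih2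
      exact ⟨u * v, mul_mem hu hv, rfl⟩
  · rintro ⟨u, hu, rfl⟩
    have key : ∀ u ∈ Subgroup.closure s, ∀ b : Ω, sSup (piPart '' s) (u b) b := by
      intro u hu
      induction hu using Subgroup.closure_induction with
      | mem t ht =>
        intro b
        have hle : piPart t ≤ sSup (piPart '' s) := le_sSup ⟨t, ht, rfl⟩
        exact Setoid.le_def.1 hle (piPart_rel.2 ⟨1, by simp⟩)
      | one => intro b; simp only [Equiv.Perm.coe_one, id_eq]; exact Setoid.refl' _ b
      | mul v v' hv hv' ihv ihv' =>
        intro b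
        have h1 := ihv (v' b)
        have h2 := ihv' b
        have : (v * v') b = v (v' b) := rfl
        rw [this]
        exact Setoid.trans' _ h1 h2
      | inv v hv ihv =>
        intro b
        have := ihv (v⁻¹ b)
        rw [Equiv.Perm.apply_inv_self] at this
        exact Setoid.symm' _ this
    exact key u hu b

theorem finset_sup_mem_piSet {G : Subgroup (Equiv.Perm Ω)} (hG : JoinCoherent G)
    (T : Finset (Equiv.Perm Ω)) (hT : ∀ t ∈ T, t ∈ G) :
    sSup (piPart '' (T : Set (Equiv.Perm Ω))) ∈ piSet G := by
  classical
  induction T using Finset.induction with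
  | empty => refine ⟨1, one_mem G, ?_⟩; simp [piPart_one]
  | @insert a T ha ih =>
    rw [Finset.coe_insert, Set.image_insert_eq, sSup_insert]
    exact hG _ ⟨a, hT a (Finset.mem_insert_self a T), rfl⟩ _
      (ih fun t ht => hT t (Finset.mem_insert_of_mem ht))

theorem piPart_le {v : Equiv.Perm Ω} {E : Setoid Ω} (h : ∀ p, E (v p) p) :
    piPart v ≤ E := by
  have hn : ∀ (n : ℕ) (b : Ω), E ((v ^ n) b) b := by
    intro n
    induction n with
    | zero => intro b; simp only [pow_zero, Equiv.Perm.coe_one, id_eq]; exact Setoid.refl' _ b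
    | succ n ih =>
      intro b
      have : (v ^ (n + 1)) b = (v ^ n) (v b) := by
        rw [pow_succ]; rfl
      rw [this]
      exact Setoid.trans' _ (ih (v b)) (h b)
  rw [Setoid.le_def]
  intro a b hab
  obtain ⟨n, hn'⟩ := piPart_rel.1 hab
  obtain ⟨n', rfl | rfl⟩ := n.eq_nat_or_neg
  · rw [zpow_natCast] at hn'; rw [← hn']; exact hn n' b
  · have hb : (v ^ n') a = b := by
      rw [← hn', zpow_neg, zpow_natCast, Equiv.Perm.apply_inv_self]
    rw [← hb]
    exact Setoid.symm' _ (hn n' a)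

end WreathAux

open WreathAux Equiv Subgroup

/-- If `G ≤ Sym(X)` and `H ≤ Sym(Y)` are join-coherent and `Y` is finite, then the wreath
product `G ≀ H` in its imprimitive action on `X × Y` — here given as the subgroup `W` of
`Sym(X × Y)` consisting of all permutations `(x, y) ↦ ((f y) x, h y)` with `f : Y → G`
and `h ∈ H` — is join-coherent. -/
theorem wreath_joinCoherent {X Y : Type*} [Finite Y]
    (G : Subgroup (Equiv.Perm X)) (H : Subgroup (Equiv.Perm Y))
    (hG : JoinCoherent G) (hH : JoinCoherent H)
    (W : Subgroup (Equiv.Perm (X × Y)))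
    (hW : ∀ w : Equiv.Perm (X × Y), w ∈ W ↔
      ∃ f : Y → Equiv.Perm X, ∃ h : Equiv.Perm Y, h ∈ H ∧ (∀ y : Y, f y ∈ G) ∧
        ∀ p : X × Y, w p = (f p.2 p.1, h p.2)) :
    JoinCoherent W := by
  classical
  rcases isEmpty_or_nonempty X with hX | hX
  · have hsub : ∀ A B : Setoid (X × Y), A = B := fun A B =>
      Setoid.ext fun a _ => isEmptyElim a.1
    intro P1 hP1 P2 hP2
    rw [hsub (P1 ⊔ P2) P1]
    exact hP1
  obtain ⟨x0⟩ := hX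
  intro P1 hP1 P2 hP2
  obtain ⟨w1, hw1W, rfl⟩ := hP1
  obtain ⟨w2, hw2W, rfl⟩ := hP2
  obtain ⟨f1, h1, h1H, hf1G, hw1app⟩ := (hW w1).1 hw1W
  obtain ⟨f2, h2, h2H, hf2G, hw2app⟩ := (hW w2).1 hw2W
  set U : Subgroup (Equiv.Perm (X × Y)) := Subgroup.closure {w1, w2} with hU
  have hUW : U ≤ W := (Subgroup.closure_le W).2 (by
    rintro v (rfl | rfl)
    exacts [hw1W, hw2W])
  set P : Setoid (X × Y) := piPart w1 ⊔ piPart w2 with hPdef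
  have hPrel : ∀ a b : X × Y, P a b ↔ ∃ u ∈ U, u b = a := by
    intro a b
    rw [hPdef, ← sSup_pair, ← Set.image_pair]
    exact rel_sSup_iff
  -- data for elements of W
  have key : ∀ u : W, ∃ f : Y → Equiv.Perm X, ∃ h' : Equiv.Perm Y, h' ∈ H ∧
      (∀ y, f y ∈ G) ∧ ∀ p : X × Y, (u : Equiv.Perm (X × Y)) p = (f p.2 p.1, h' p.2) :=
    fun u => (hW u).1 u.2
  choose fW hTop hTopH hfWG happly using key
  -- the Y-part homomorphism on U
  have hφfun : ∀ u : U, ∀ x y, ((u : Equiv.Perm (X × Y)) (x, y)).2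
      = hTop (Subgroup.inclusion hUW u) y := by
    intro u x y
    have := happly (Subgroup.inclusion hUW u) (x, y)
    rw [show ((Subgroup.inclusion hUW u : W) : Equiv.Perm (X × Y))
        = (u : Equiv.Perm (X × Y)) from rfl] at this
    rw [this]
  have hφuniq : ∀ (u : U) (e : Equiv.Perm Y),
      (∀ x y, ((u : Equiv.Perm (X × Y)) (x, y)).2 = e y) →
      hTop (Subgroup.inclusion hUW u) = e := by
    intro u e he
    ext y
    rw [← hφfun u x0 y, he]
  let φ : U →* Equiv.Perm Y :=
    { toFun := fun u => hTop (Subgroup.inclusion hUW u)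
      map_one' := by
        apply hφuniq
        intro x y
        rfl
      map_mul' := by
        intro u v
        apply hφuniq
        intro x y
        have h1 : ((u * v : U) : Equiv.Perm (X × Y)) (x, y)
            = (u : Equiv.Perm (X × Y)) ((v : Equiv.Perm (X × Y)) (x, y)) := rfl
        rw [h1]
        have h2 : (v : Equiv.Perm (X × Y)) (x, y)
            = (((v : Equiv.Perm (X × Y)) (x, y)).1, hTop (Subgroup.inclusion hUW v) y) := by
          rw [← hφfun v x y]
        rw [h2, hφfun u]
        rfl }
  have hφ_spec : ∀ (u : U) (x : X) (y : Y),
      ((u : Equiv.Perm (X × Y)) (x, y)).2 = φ u y := fun u x y => hφfun u x y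
  have hφw1 : ∀ hh : w1 ∈ U, φ ⟨w1, hh⟩ = h1 := by
    intro hh
    apply hφuniq
    intro x y
    rw [show ((⟨w1, hh⟩ : U) : Equiv.Perm (X × Y)) = w1 from rfl, hw1app]
  have hφw2 : ∀ hh : w2 ∈ U, φ ⟨w2, hh⟩ = h2 := by
    intro hh
    apply hφuniq
    intro x y
    rw [show ((⟨w2, hh⟩ : U) : Equiv.Perm (X × Y)) = w2 from rfl, hw2app]
  -- the top setoid Q
  obtain ⟨h, hhH, hQh⟩ := hH _ ⟨h1, h1H, rfl⟩ _ ⟨h2, h2H, rfl⟩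
  set Q : Setoid Y := piPart h with hQdef
  have hQsup : Q = piPart h1 ⊔ piPart h2 := hQh
  have hQrel : ∀ y y' : Y, Q y y' ↔ ∃ u : U, φ u y' = y := by
    intro y y'
    rw [hQsup, ← sSup_pair, ← Set.image_pair]
    rw [rel_sSup_iff]
    constructor
    · rintro ⟨v, hv, rfl⟩
      have : ∀ v ∈ Subgroup.closure {h1, h2}, ∃ u : U, φ u = v := by
        intro v hv
        induction hv using Subgroup.closure_induction with
        | mem t ht =>
          rcases ht with rfl | rfl
          · exact ⟨⟨w1, Subgroup.subset_closure (Set.mem_insert _ _)⟩, hφw1 _⟩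
          · exact ⟨⟨w2, Subgroup.subset_closure (Set.mem_insert_of_mem _ rfl)⟩, hφw2 _⟩
        | one => exact ⟨1, map_one φ⟩
        | mul a b _ _ iha ihb =>
          obtain ⟨u, rfl⟩ := iha
          obtain ⟨u', rfl⟩ := ihb
          exact ⟨u * u', map_mul φ u u'⟩
        | inv a _ iha =>
          obtain ⟨u, rfl⟩ := iha
          exact ⟨u⁻¹, map_inv φ u⟩
      obtain ⟨u, rfl⟩ := this v hv
      exact ⟨u, rfl⟩
    · rintro ⟨u, rfl⟩
      refine ⟨φ u, ?_, rfl⟩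
      have : ∀ v (hv : v ∈ U), φ ⟨v, hv⟩ ∈ Subgroup.closure {h1, h2} := by
        intro v hv
        induction hv using Subgroup.closure_induction with
        | mem t ht =>
          rcases ht with rfl | rfl
          · rw [hφw1]; exact Subgroup.subset_closure (Set.mem_insert _ _)
          · rw [hφw2]; exact Subgroup.subset_closure (Set.mem_insert_of_mem _ rfl)
        | one =>
          rw [show (⟨1, one_mem U⟩ : U) = 1 from rfl, map_one]
          exact one_mem _
        | mul a b ha hb iha ihb =>
          rw [show (⟨a * b, mul_mem ha hb⟩ : U) = ⟨a, ha⟩ * ⟨b, hb⟩ from rfl, map_mul]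
          exact mul_mem iha ihb
        | inv a ha iha =>
          rw [show (⟨a⁻¹, inv_mem ha⟩ : U) = (⟨a, ha⟩ : U)⁻¹ from rfl, map_inv]
          exact inv_mem iha
      exact this u u.2
    -- representative function
  set r : Y → Y := fun y => (Quotient.mk Q y).out with hrdef
  have hr1 : ∀ y, Q (r y) y := fun y => Quotient.mk_out y
  have hr2 : ∀ {y y'}, Q y y' → r y = r y' := by
    intro y y' hyy
    have : Quotient.mk Q y = Quotient.mk Q y' := Quot.sound hyy
    simp only [hrdef, this]
  have hr3 : ∀ y, r (r y) = r y := by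
    intro y
    simp only [hrdef, Quotient.out_eq]
  have hrh : ∀ (n : ℤ) (y : Y), r ((h ^ n) y) = r y := by
    intro n y
    apply hr2
    rw [hQdef]
    exact piPart_rel.2 ⟨n, rfl⟩
  have hrhn : ∀ (n : ℕ) (y : Y), r ((h ^ n) y) = r y := by
    intro n y
    have := hrh (n : ℤ) y
    rwa [zpow_natCast] at this
  -- transports σ
  have hσ_ex : ∀ y : Y, ∃ s : Equiv.Perm X, s ∈ G ∧
      ∀ z : X, P (s z, y) (z, r y) := by
    intro y
    obtain ⟨u, hu⟩ := (hQrel y (r y)).1 (Setoid.symm' Q (hr1 y))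
    refine ⟨fW (Subgroup.inclusion hUW u) (r y), hfWG _ _, fun z => ?_⟩
    have happ : (u : Equiv.Perm (X × Y)) (z, r y)
        = (fW (Subgroup.inclusion hUW u) (r y) z, y) := by
      have h1 := happly (Subgroup.inclusion hUW u) (z, r y)
      rw [show ((Subgroup.inclusion hUW u : W) : Equiv.Perm (X × Y))
          = (u : Equiv.Perm (X × Y)) from rfl] at h1
      rw [h1]
      have : hTop (Subgroup.inclusion hUW u) (r y) = y := hu
      rw [this]
    exact (hPrel _ _).2 ⟨u, u.2, happ⟩
  choose σ hσG hσP using hσ_ex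
  -- fiber setoids are in piSet G
  have hR : ∀ ρ : Y, ∃ g0 : Equiv.Perm X, g0 ∈ G ∧
      ∀ z z' : X, piPart g0 z z' ↔ P (z, ρ) (z', ρ) := by
    intro ρ
    haveI hUFG : Group.FG U := by
      rw [Group.fg_iff_subgroup_fg]
      exact ⟨{w1, w2}, by rw [Finset.coe_insert, Finset.coe_singleton]⟩
    letI : MulAction U Y := MulAction.compHom Y φ
    have hsmul : ∀ (u : U) (y : Y), u • y = φ u y := fun _ _ => rfl
    have hidx : (MulAction.stabilizer U ρ).index ≠ 0 := by
      rw [MulAction.index_stabilizer]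
      have hfin : (MulAction.orbit U ρ).Finite := Set.toFinite _
      have hpos : 0 < (MulAction.orbit U ρ).ncard :=
        (Set.ncard_pos hfin).2 ⟨ρ, MulAction.mem_orbit_self ρ⟩
      omega
    haveI : (MulAction.stabilizer U ρ).FiniteIndex := ⟨hidx⟩
    haveI : Group.FG (MulAction.stabilizer U ρ) := Subgroup.fg_of_index_ne_zero _
    set St := MulAction.stabilizer U ρ with hSt
    have hfix : ∀ u : St, φ (u : U) ρ = ρ := by
      intro u
      have h0 : (u : U) • ρ = ρ := MulAction.mem_stabilizer_iff.1 u.2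
      rwa [hsmul] at h0
    have hev0 : ∀ (u : St) (z : X), ((((u : U)) : Equiv.Perm (X × Y)) (z, ρ))
        = (fW (Subgroup.inclusion hUW (u : U)) ρ z, ρ) := by
      intro u z
      have h1 := happly (Subgroup.inclusion hUW (u : U)) (z, ρ)
      rw [show ((Subgroup.inclusion hUW (u : U) : W) : Equiv.Perm (X × Y))
          = ((u : U) : Equiv.Perm (X × Y)) from rfl] at h1
      rw [h1]
      have h2 : hTop (Subgroup.inclusion hUW (u : U)) ρ = φ (u : U) ρ := rfl
      rw [h2, hfix u]
    let ev : St →* Equiv.Perm X :=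
      { toFun := fun u => fW (Subgroup.inclusion hUW (u : U)) ρ
        map_one' := by
          ext z
          have := hev0 1 z
          simpa using this.symm
        map_mul' := by
          intro u v
          ext z
          have h1 := hev0 (u * v) z
          have h2 := hev0 v z
          have h3 := hev0 u (fW (Subgroup.inclusion hUW (v : U)) ρ z)
          have h4 : (((u * v : St) : U) : Equiv.Perm (X × Y)) (z, ρ)
              = (((u : U)) : Equiv.Perm (X × Y)) ((((v : U)) : Equiv.Perm (X × Y)) (z, ρ)) := rfl
          rw [h4, h2, h3] at h1
          have := congrArg Prod.fst h1
          simpa using this.symm }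
    haveI : Group.FG ev.range := Group.fg_range ev
    obtain ⟨T, hT⟩ := (Group.fg_iff_subgroup_fg ev.range).1 inferInstance
    have hTG : ∀ t ∈ T, t ∈ G := by
      intro t ht
      have : t ∈ ev.range := by
        rw [← hT]
        exact Subgroup.subset_closure ht
      obtain ⟨u, rfl⟩ := this
      exact hfWG _ _
    obtain ⟨g0, hg0G, hg0⟩ := finset_sup_mem_piSet hG T hTG
    refine ⟨g0, hg0G, fun z z' => ?_⟩
    rw [hg0, rel_sSup_iff, hT, hPrel]
    constructor
    · rintro ⟨v, ⟨u, rfl⟩, hv⟩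
      refine ⟨((u : U) : Equiv.Perm (X × Y)), (u : U).2, ?_⟩
      rw [hev0 u z']
      rw [show ev u z' = fW (Subgroup.inclusion hUW (u : U)) ρ z' from rfl] at hv
      rw [hv]
    · rintro ⟨v, hvU, hv⟩
      have hst : (⟨v, hvU⟩ : U) ∈ St := by
        rw [hSt, MulAction.mem_stabilizer_iff]
        show φ (⟨v, hvU⟩ : U) ρ = ρ
        rw [← hφ_spec ⟨v, hvU⟩ z' ρ]
        rw [show ((⟨v, hvU⟩ : U) : Equiv.Perm (X × Y)) = v from rfl, hv]
      refine ⟨ev ⟨⟨v, hvU⟩, hst⟩, ⟨⟨⟨v, hvU⟩, hst⟩, rfl⟩, ?_⟩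
      have h5 := hev0 ⟨⟨v, hvU⟩, hst⟩ z'
      rw [show ((((⟨⟨v, hvU⟩, hst⟩ : St) : U)) : Equiv.Perm (X × Y)) = v from rfl, hv] at h5
      exact (congrArg Prod.fst h5).symm
  choose gsel hgselG hgsel using hR
  -- construction of the new wreath element
  set c : Y → Equiv.Perm X := fun y => if h y = r y then gsel (r y) else 1 with hcdef
  set f' : Y → Equiv.Perm X := fun y => σ (h y) * c y * (σ y)⁻¹ with hf'def
  have hf'G : ∀ y, f' y ∈ G := by
    intro y
    refine mul_mem (mul_mem (hσG _) ?_) (inv_mem (hσG y))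
    rw [hcdef]
    dsimp only
    split
    · exact hgselG _
    · exact one_mem G
  set w : Equiv.Perm (X × Y) :=
    { toFun := fun p => (f' p.2 p.1, h p.2)
      invFun := fun q => ((f' (h⁻¹ q.2))⁻¹ q.1, h⁻¹ q.2)
      left_inv := by
        rintro ⟨x, y⟩
        simp
      right_inv := by
        rintro ⟨x, y⟩
        simp } with hwdef
  have hwW : w ∈ W := (hW w).2 ⟨f', h, hhH, hf'G, fun p => rfl⟩
  have hwapp : ∀ x y, w (x, y) = (f' y x, h y) := fun x y => rfl
  -- single step
  have step : ∀ y z, w (σ y z, y) = (σ (h y) (c y z), h y) := by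
    intro y z
    rw [hwapp, hf'def]
    dsimp only
    rw [show (σ (h y) * c y * (σ y)⁻¹) (σ y z) = σ (h y) (c y ((σ y)⁻¹ (σ y z))) from rfl,
      Equiv.Perm.inv_apply_self]
  -- forward computation of powers, natural case
  have CfwdNat : ∀ (n : ℕ) (y : Y), ∃ m : ℤ, ∀ z,
      (w ^ n) (σ y z, y) = (σ ((h ^ n) y) ((gsel (r y) ^ m) z), (h ^ n) y) := by
    intro n y
    induction n with
    | zero =>
      refine ⟨0, fun z => ?_⟩
      simp
    | succ n ih =>
      obtain ⟨m, hm⟩ := ih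
      refine ⟨if h ((h ^ n) y) = r y then m + 1 else m, fun z => ?_⟩
      have hps : (w ^ (n + 1)) (σ y z, y) = w ((w ^ n) (σ y z, y)) := by
        rw [pow_succ']
        rfl
      rw [hps, hm z, step ((h ^ n) y) ((gsel (r y) ^ m) z)]
      have hcy : c ((h ^ n) y) ((gsel (r y) ^ m) z)
          = (gsel (r y) ^ (if h ((h ^ n) y) = r y then m + 1 else m)) z := by
        rw [hcdef]
        dsimp only
        rw [hrhn n y]
        split
        · rw [show gsel (r y) ((gsel (r y) ^ m) z) = (gsel (r y) * gsel (r y) ^ m) z from rfl,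
            ← zpow_one_add]
          ring_nf
        · rfl
      rw [hcy]
      congr 1 <;> rw [show h ((h ^ n) y) = (h ^ (n + 1)) y from by rw [pow_succ']; rfl]
  have Cfwd : ∀ (n : ℤ) (y : Y), ∃ m : ℤ, ∀ z,
      (w ^ n) (σ y z, y) = (σ ((h ^ n) y) ((gsel (r y) ^ m) z), (h ^ n) y) := by
    intro n y
    obtain ⟨n', rfl | rfl⟩ := n.eq_nat_or_neg
    · obtain ⟨m, hm⟩ := CfwdNat n' y
      refine ⟨m, fun z => ?_⟩
      rw [zpow_natCast]
      rw [zpow_natCast]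
      exact hm z
    · set y0 := (h ^ (-(n' : ℤ))) y with hy0
      have hy0y : (h ^ (n' : ℤ)) y0 = y := by
        rw [hy0, show (h ^ ((n' : ℤ))) ((h ^ (-(n' : ℤ))) y) = ((h ^ ((n' : ℤ))) * (h ^ (-(n' : ℤ)))) y from rfl,
          ← zpow_add]
        simp
      obtain ⟨m, hm⟩ := CfwdNat n' y0
      have hry0 : r y0 = r y := hrh _ y
      refine ⟨-m, fun z => ?_⟩
      have hfwd : (w ^ n') (σ y0 ((gsel (r y) ^ (-m : ℤ)) z), y0) = (σ y z, y) := by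
        rw [hm ((gsel (r y) ^ (-m : ℤ)) z)]
        rw [hry0]
        rw [show (gsel (r y) ^ m) ((gsel (r y) ^ (-m : ℤ)) z)
          = ((gsel (r y) ^ m) * (gsel (r y) ^ (-m : ℤ))) z from rfl, ← zpow_add]
        simp only [add_neg_cancel, zpow_zero]
        rw [show (h ^ n') y0 = (h ^ (n' : ℤ)) y0 from by rw [zpow_natCast], hy0y]
        rfl
      have : (w ^ (-(n' : ℤ))) (σ y z, y) = (w ^ (-(n' : ℤ))) ((w ^ n') (σ y0 ((gsel (r y) ^ (-m : ℤ)) z), y0)) := by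
        rw [hfwd]
      rw [this, show (w ^ (-(n' : ℤ))) ((w ^ n') (σ y0 ((gsel (r y) ^ (-m : ℤ)) z), y0))
          = (((w ^ (-(n' : ℤ))) * (w ^ (n' : ℤ)))) (σ y0 ((gsel (r y) ^ (-m : ℤ)) z), y0) from by
        rw [show ((w ^ (n' : ℤ))) = (w ^ n') from zpow_natCast w n']
        rfl, ← zpow_add]
      simp only [neg_add_cancel, zpow_zero]
      rfl
  -- full cycle
  have cyc : ∀ ρ : Y, r ρ = ρ → ∀ z,
      (w ^ Function.minimalPeriod (⇑h) ρ) (σ ρ z, ρ) = (σ ρ (gsel ρ z), ρ) := by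
    intro ρ hρ
    set k := Function.minimalPeriod (⇑h) ρ with hk
    have hper : Function.IsPeriodicPt (⇑h) (orderOf h) ρ := by
      have : h ^ orderOf h = 1 := pow_orderOf_eq_one h
      show (⇑h)^[orderOf h] ρ = ρ
      rw [Equiv.Perm.iterate_eq_pow, this]
      rfl
    have hord : 0 < orderOf h := orderOf_pos h
    have hkpos : 0 < k := Function.IsPeriodicPt.minimalPeriod_pos hord hper
    have hkρ : (h ^ k) ρ = ρ := by
      have := Function.isPeriodicPt_minimalPeriod (⇑h) ρ
      rwa [Function.IsPeriodicPt, Function.IsFixedPt, Equiv.Perm.iterate_eq_pow] at this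
    have hkmin : ∀ j, 0 < j → j < k → (h ^ j) ρ ≠ ρ := by
      intro j hj1 hj2 hcon
      exact Function.not_isPeriodicPt_of_pos_of_lt_minimalPeriod (by omega : j ≠ 0)
        hj2 (by rwa [Function.IsPeriodicPt, Function.IsFixedPt, Equiv.Perm.iterate_eq_pow])
    have main : ∀ j, j ≤ k → ∀ z, (w ^ j) (σ ρ z, ρ)
        = if j = k then (σ ρ (gsel ρ z), ρ) else (σ ((h ^ j) ρ) z, (h ^ j) ρ) := by
      intro j
      induction j with
      | zero =>
        intro _ z
        rw [if_neg (by omega)]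
        simp
      | succ j ih =>
        intro hjk z
        have hj : j ≤ k := le_of_lt (Nat.lt_of_succ_le hjk)
        have hjne : j ≠ k := by omega
        have hps : (w ^ (j + 1)) (σ ρ z, ρ) = w ((w ^ j) (σ ρ z, ρ)) := by
          rw [pow_succ']
          rfl
        rw [hps, ih hj z, if_neg hjne, step ((h ^ j) ρ) z]
        have hcval : c ((h ^ j) ρ) = if h ((h ^ j) ρ) = ρ then gsel ρ else 1 := by
          rw [hcdef]
          dsimp only
          rw [hrhn j ρ, hρ]
        have hstep2 : h ((h ^ j) ρ) = (h ^ (j + 1)) ρ := by rw [pow_succ']; rfl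
        by_cases hcase : j + 1 = k
        · rw [if_pos hcase]
          have hhh : h ((h ^ j) ρ) = ρ := by rw [hstep2, hcase, hkρ]
          rw [hcval, if_pos hhh, hhh]
        · rw [if_neg hcase]
          have hhh : h ((h ^ j) ρ) ≠ ρ := by
            rw [hstep2]
            exact hkmin (j + 1) (Nat.succ_pos j) (by omega)
          rw [hcval, if_neg hhh, hstep2]
          rfl
    have := main k le_rfl
    intro z
    rw [this z, if_pos rfl]
  -- all powers of the base permutation are realized
  have Apow : ∀ ρ : Y, r ρ = ρ → ∀ (m : ℤ) z,
      (w ^ (m * (Function.minimalPeriod (⇑h) ρ : ℤ))) (σ ρ z, ρ) = (σ ρ ((gsel ρ ^ m) z), ρ) := by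
    intro ρ hρ
    set k := Function.minimalPeriod (⇑h) ρ with hk
    have hnat : ∀ (m : ℕ) z, (w ^ ((m : ℤ) * (k : ℤ))) (σ ρ z, ρ) = (σ ρ ((gsel ρ ^ (m : ℤ)) z), ρ) := by
      intro m
      induction m with
      | zero => intro z; simp
      | succ m ih =>
        intro z
        have hsplit : ((m : ℤ) + 1) * (k : ℤ) = (m : ℤ) * (k : ℤ) + (k : ℤ) := by ring
        rw [show (((m + 1 : ℕ) : ℤ)) = (m : ℤ) + 1 from by push_cast; ring, hsplit, zpow_add]
        rw [show ((w ^ ((m : ℤ) * (k : ℤ))) * (w ^ (k : ℤ))) (σ ρ z, ρ)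
          = (w ^ ((m : ℤ) * (k : ℤ))) ((w ^ (k : ℤ)) (σ ρ z, ρ)) from rfl]
        rw [show (w ^ (k : ℤ)) = w ^ k from zpow_natCast w k, cyc ρ hρ z, ih (gsel ρ z)]
        rw [show (gsel ρ ^ (m : ℤ)) (gsel ρ z) = ((gsel ρ ^ (m : ℤ)) * gsel ρ) z from rfl, ← zpow_add_one]
    intro m z
    obtain ⟨m', rfl | rfl⟩ := m.eq_nat_or_neg
    · exact hnat m' z
    · have h1 := hnat m' ((gsel ρ ^ (-(m' : ℤ))) z)
      rw [show (gsel ρ ^ ((m' : ℤ))) ((gsel ρ ^ (-(m' : ℤ))) z)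
        = ((gsel ρ ^ ((m' : ℤ))) * (gsel ρ ^ (-(m' : ℤ)))) z from rfl, ← zpow_add] at h1
      simp only [add_neg_cancel, zpow_zero] at h1
      rw [show ((1 : Equiv.Perm X)) z = z from rfl] at h1
      have h2 : (w ^ (-(m' : ℤ) * (k : ℤ))) ((w ^ ((m' : ℤ) * (k : ℤ))) (σ ρ ((gsel ρ ^ (-(m' : ℤ))) z), ρ))
          = (σ ρ ((gsel ρ ^ (-(m' : ℤ))) z), ρ) := by
        rw [show (w ^ (-(m' : ℤ) * (k : ℤ))) ((w ^ ((m' : ℤ) * (k : ℤ))) (σ ρ ((gsel ρ ^ (-(m' : ℤ))) z), ρ))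
          = ((w ^ (-(m' : ℤ) * (k : ℤ))) * (w ^ ((m' : ℤ) * (k : ℤ)))) (σ ρ ((gsel ρ ^ (-(m' : ℤ))) z), ρ) from rfl,
          ← zpow_add]
        simp
      rw [h1] at h2
      exact h2
  -- backward claim: the w-orbits contain everything required
  have Cback : ∀ (y y' : Y) (x x' : X) (m : ℤ), r y = r y' →
      σ y' ((gsel (r y) ^ m) ((σ y)⁻¹ x)) = x' → ∃ N : ℤ, (w ^ N) (x, y) = (x', y') := by
    intro y y' x x' m hyy' hx'
    set ρ := r y with hρdef
    have hρ : r ρ = ρ := hr3 y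
    set k := Function.minimalPeriod (⇑h) ρ with hkdef
    obtain ⟨n1, hn1⟩ := piPart_rel.1 (hr1 y)
    obtain ⟨n2, hn2⟩ := piPart_rel.1 (Setoid.symm' Q (hr1 y'))
    rw [← hyy'] at hn2
    obtain ⟨a, ha⟩ := Cfwd n1 y
    obtain ⟨b, hb⟩ := Cfwd n2 ρ
    set g := gsel ρ with hgdef
    set z0 := (σ y)⁻¹ x with hz0
    refine ⟨n2 + ((m - a - b) * (k : ℤ) + n1), ?_⟩
    have hdecomp : (w ^ (n2 + ((m - a - b) * (k : ℤ) + n1))) (x, y)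
        = (w ^ n2) ((w ^ ((m - a - b) * (k : ℤ))) ((w ^ n1) (x, y))) := by
      rw [zpow_add, zpow_add]
      rfl
    rw [hdecomp]
    have e1 : (w ^ n1) (x, y) = (σ ρ ((g ^ a) z0), ρ) := by
      have := ha z0
      rw [show σ y z0 = x from Equiv.Perm.apply_inv_self _ _, hn1] at this
      rw [this, ← hρdef]
    rw [e1]
    have e2 : (w ^ ((m - a - b) * (k : ℤ))) (σ ρ ((g ^ a) z0), ρ)
        = (σ ρ ((g ^ (m - b)) z0), ρ) := by
      rw [Apow ρ hρ (m - a - b) ((g ^ a) z0)]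
      rw [show (g ^ (m - a - b)) ((g ^ a) z0) = ((g ^ (m - a - b)) * (g ^ a)) z0 from rfl, ← zpow_add]
      ring_nf
    rw [e2]
    have e3 : (w ^ n2) (σ ρ ((g ^ (m - b)) z0), ρ) = (σ y' ((g ^ m) z0), y') := by
      have := hb ((g ^ (m - b)) z0)
      rw [hρ, hn2] at this
      rw [this]
      rw [show (g ^ b) ((g ^ (m - b)) z0) = ((g ^ b) * (g ^ (m - b))) z0 from rfl, ← zpow_add]
      ring_nf
    rw [e3, hx']
  -- P relates along the canonical transports
  have Dback : ∀ (y y' : Y) (x : X) (m : ℤ), r y = r y' →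
      P (x, y) (σ y' ((gsel (r y) ^ m) ((σ y)⁻¹ x)), y') := by
    intro y y' x m hyy'
    set z0 := (σ y)⁻¹ x with hz0
    have t1 : P (x, y) (z0, r y) := by
      have := hσP y z0
      rwa [show σ y z0 = x from Equiv.Perm.apply_inv_self _ _] at this
    have t2 : P (z0, r y) ((gsel (r y) ^ m) z0, r y) := by
      apply Setoid.symm'
      rw [← hgsel (r y) ((gsel (r y) ^ m) z0) z0]
      exact piPart_rel.2 ⟨m, rfl⟩
    have t3 : P ((gsel (r y) ^ m) z0, r y) (σ y' ((gsel (r y) ^ m) z0), y') := by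
      apply Setoid.symm'
      have := hσP y' ((gsel (r y) ^ m) z0)
      rwa [← hyy'] at this
    exact Setoid.trans' P (Setoid.trans' P t1 t2) t3
  have Dfwd : ∀ (x : X) (y : Y) (x' : X) (y' : Y), P (x, y) (x', y') →
      r y = r y' ∧ ∃ m : ℤ, σ y' ((gsel (r y) ^ m) ((σ y)⁻¹ x)) = x' := by
    intro x y x' y' hp
    obtain ⟨u, huU, hu⟩ := (hPrel _ _).1 hp
    have hφval : φ (⟨u, huU⟩ : U) y' = y := by
      rw [← hφ_spec ⟨u, huU⟩ x' y']
      rw [show ((⟨u, huU⟩ : U) : Equiv.Perm (X × Y)) = u from rfl, hu]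
    have hQyy' : Q y y' := (hQrel y y').2 ⟨⟨u, huU⟩, hφval⟩
    have hryy' : r y = r y' := hr2 hQyy'
    refine ⟨hryy', ?_⟩
    set z0 := (σ y)⁻¹ x with hz0
    set z0' := (σ y')⁻¹ x' with hz0'
    have t1 : P (x, y) (z0, r y) := by
      have := hσP y z0
      rwa [show σ y z0 = x from Equiv.Perm.apply_inv_self _ _] at this
    have t1' : P (x', y') (z0', r y) := by
      have := hσP y' z0'
      rw [show σ y' z0' = x' from Equiv.Perm.apply_inv_self _ _] at this
      rwa [← hryy'] at this
    have hzz : P (z0, r y) (z0', r y) :=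
      Setoid.trans' P (Setoid.symm' P t1) (Setoid.trans' P hp t1')
    have hrel : piPart (gsel (r y)) z0' z0 := by
      rw [hgsel (r y) z0' z0]
      exact Setoid.symm' P hzz
    obtain ⟨m, hm⟩ := piPart_rel.1 hrel
    refine ⟨m, ?_⟩
    rw [hm, hz0']
    exact Equiv.Perm.apply_inv_self _ _
  -- conclusion
  refine ⟨w, hwW, ?_⟩
  apply le_antisymm
  · apply piPart_le
    rintro ⟨x, y⟩
    apply Setoid.symm'
    have hrh1 : r y = r (h y) := by
      have := hrh 1 y
      rw [zpow_one] at this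
      exact this.symm
    have hD := Dback y (h y) x (if h y = r y then 1 else 0) hrh1
    have hcx : ∀ z, c y z = (gsel (r y) ^ (if h y = r y then (1 : ℤ) else 0)) z := by
      intro z
      simp only [hcdef]
      by_cases hcase : h y = r y
      · simp only [if_pos hcase, zpow_one]
      · simp only [if_neg hcase, zpow_zero]
    have hwx : w (x, y) = (σ (h y) ((gsel (r y) ^ (if h y = r y then (1 : ℤ) else 0)) ((σ y)⁻¹ x)), h y) := by
      rw [hwapp]
      rw [show f' y x = σ (h y) (c y ((σ y)⁻¹ x)) from rfl, hcx]
    rw [hwx]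
    exact hD
  · rw [hPdef]
    apply sup_le
    · apply piPart_le
      rintro ⟨x, y⟩
      have hp : P (w1 (x, y)) (x, y) :=
        Setoid.le_def.1 le_sup_left (piPart_rel.2 ⟨1, by rw [zpow_one]⟩)
      rw [hw1app (x, y)] at hp ⊢
      obtain ⟨hre, m, hm⟩ := Dfwd x y (f1 y x) (h1 y) (Setoid.symm' P hp)
      obtain ⟨N, hN⟩ := Cback y (h1 y) x (f1 y x) m hre hm
      exact piPart_rel.2 ⟨N, hN⟩
    · apply piPart_le
      rintro ⟨x, y⟩
      have hp : P (w2 (x, y)) (x, y) :=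
        Setoid.le_def.1 le_sup_right (piPart_rel.2 ⟨1, by rw [zpow_one]⟩)
      rw [hw2app (x, y)] at hp ⊢
      obtain ⟨hre, m, hm⟩ := Dfwd x y (f2 y x) (h2 y) (Setoid.symm' P hp)
      obtain ⟨N, hN⟩ := Cback y (h2 y) x (f2 y x) m hre hm
      exact piPart_rel.2 ⟨N, hN⟩
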